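/- arXiv:2004.11540 — 2 statements merged into one kernel-verified Lean document; each statement's English description precedes it below -/
import Mathlib

section
/- Let M ∈ ℝ^(3×3) with SVD M = U Σ Vᵀ, Σ = diag(σ₁, σ₂, σ₃) with σ₁ ≥ σ₂ ≥ σ₃ ≥ 0. Then max over R ∈ SO(3) of Tr(R M) equals σ₁ + σ₂ + det(UV) σ₃, attained at R = V S Uᵀ with S = diag(1, 1, det(U)det(V)). -/
open Matrix

private lemma so3_trace_ge (W : Matrix (Fin 3) (Fin 3) ℝ)
    (h1 : W * Wᵀ = 1) (h2 : W.det = 1) : -1 ≤ W.trace := by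
  have hadj : adjugate W = Wᵀ := by
    have h1' : Wᵀ * W = 1 := mul_eq_one_comm.mp h1
    calc adjugate W = (Wᵀ * W) * adjugate W := by rw [h1', one_mul]
    _ = Wᵀ * (W * adjugate W) := by rw [mul_assoc]
    _ = Wᵀ := by rw [mul_adjugate, h2, one_smul, mul_one]
  rw [adjugate_fin_three] at hadj
  have c1 : W 1 1 * W 2 2 - W 1 2 * W 2 1 = W 0 0 := by
    have := congrFun (congrFun hadj 0) 0; simpa using this
  have c2 : W 0 0 * W 2 2 - W 0 2 * W 2 0 = W 1 1 := by
    have := congrFun (congrFun hadj 1) 1; simpa using this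
  have c3 : W 0 0 * W 1 1 - W 0 1 * W 1 0 = W 2 2 := by
    have := congrFun (congrFun hadj 2) 2; simpa using this
  have r1 : (W * Wᵀ) 0 0 = (1 : Matrix (Fin 3) (Fin 3) ℝ) 0 0 := by rw [h1]
  have r2 : (W * Wᵀ) 1 1 = (1 : Matrix (Fin 3) (Fin 3) ℝ) 1 1 := by rw [h1]
  have r3 : (W * Wᵀ) 2 2 = (1 : Matrix (Fin 3) (Fin 3) ℝ) 2 2 := by rw [h1]
  simp [Matrix.mul_apply, Fin.sum_univ_three, Matrix.one_apply] at r1 r2 r3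
  rw [Matrix.trace_fin_three]
  nlinarith [sq_nonneg (1 + W 0 0 + W 1 1 + W 2 2), sq_nonneg (W 1 2 - W 2 1),
    sq_nonneg (W 0 2 - W 2 0), sq_nonneg (W 0 1 - W 1 0)]

private lemma key_bound (W : Matrix (Fin 3) (Fin 3) ℝ) (σ : Fin 3 → ℝ) (d : ℝ)
    (hσ : σ 0 ≥ σ 1) (hσ' : σ 1 ≥ σ 2) (hσ'' : 0 ≤ σ 2)
    (h1 : W * Wᵀ = 1) (h2 : W.det = d) (hd : d = 1 ∨ d = -1) :
    Matrix.trace (W * Matrix.diagonal σ) ≤ σ 0 + σ 1 + d * σ 2 := by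
  have r1 : (W * Wᵀ) 0 0 = (1 : Matrix (Fin 3) (Fin 3) ℝ) 0 0 := by rw [h1]
  have r2 : (W * Wᵀ) 1 1 = (1 : Matrix (Fin 3) (Fin 3) ℝ) 1 1 := by rw [h1]
  simp [Matrix.mul_apply, Fin.sum_univ_three, Matrix.one_apply] at r1 r2
  have ha : W 0 0 ≤ 1 := by nlinarith [sq_nonneg (W 0 0 - 1)]
  have he : W 1 1 ≤ 1 := by nlinarith [sq_nonneg (W 1 1 - 1)]
  have htr : W 0 0 + W 1 1 + W 2 2 ≤ 2 + d := by
    rcases hd with hd | hd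
    · have r3 : (W * Wᵀ) 2 2 = (1 : Matrix (Fin 3) (Fin 3) ℝ) 2 2 := by rw [h1]
      simp [Matrix.mul_apply, Fin.sum_univ_three, Matrix.one_apply] at r3
      have hi : W 2 2 ≤ 1 := by nlinarith [sq_nonneg (W 2 2 - 1)]
      rw [hd]; linarith
    · have hh1 : (-W) * (-W)ᵀ = 1 := by
        rw [transpose_neg, neg_mul_neg, h1]
      have hh2 : (-W).det = 1 := by
        rw [det_neg, h2, hd]; norm_num
      have := so3_trace_ge (-W) hh1 hh2
      rw [trace_neg, Matrix.trace_fin_three] at this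
      rw [hd]; linarith
  have ht : Matrix.trace (W * Matrix.diagonal σ)
      = W 0 0 * σ 0 + W 1 1 * σ 1 + W 2 2 * σ 2 := by
    simp [Matrix.trace, Matrix.mul_apply, Matrix.diagonal, Fin.sum_univ_three]
  rw [ht]
  nlinarith [mul_nonneg (sub_nonneg.mpr hσ) (sub_nonneg.mpr ha),
    mul_nonneg (sub_nonneg.mpr hσ') (by linarith : (0:ℝ) ≤ 2 - W 0 0 - W 1 1),
    mul_nonneg hσ'' (by linarith : (0:ℝ) ≤ 2 + d - (W 0 0 + W 1 1 + W 2 2))]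

theorem so3_trace_maximization_svd
    (M U V : Matrix (Fin 3) (Fin 3) ℝ) (σ : Fin 3 → ℝ)
    (hσ : σ 0 ≥ σ 1) (hσ' : σ 1 ≥ σ 2) (hσ'' : 0 ≤ σ 2)
    (hU : U * Uᵀ = 1) (hV : V * Vᵀ = 1)
    (hM : M = U * Matrix.diagonal σ * Vᵀ)
    (S : Matrix (Fin 3) (Fin 3) ℝ)
    (hS : S = Matrix.diagonal ![1, 1, U.det * V.det]) :
    IsGreatest {x : ℝ | ∃ R : Matrix (Fin 3) (Fin 3) ℝ,
        R * Rᵀ = 1 ∧ R.det = 1 ∧ x = Matrix.trace (R * M)}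
      (σ 0 + σ 1 + (U * V).det * σ 2)
    ∧ Matrix.trace ((V * S * Uᵀ) * M) = σ 0 + σ 1 + (U * V).det * σ 2 := by
  have hUtU : Uᵀ * U = 1 := mul_eq_one_comm.mp hU
  have hVtV : Vᵀ * V = 1 := mul_eq_one_comm.mp hV
  have hdU : U.det * U.det = 1 := by
    have := congrArg Matrix.det hU
    rwa [det_mul, det_transpose, det_one] at this
  have hdV : V.det * V.det = 1 := by
    have := congrArg Matrix.det hV
    rwa [det_mul, det_transpose, det_one] at this
  have hduv : (U * V).det = U.det * V.det := det_mul U V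
  have hd2 : (U.det * V.det) * (U.det * V.det) = 1 := by
    calc (U.det * V.det) * (U.det * V.det) = (U.det * U.det) * (V.det * V.det) := by ring
    _ = 1 := by rw [hdU, hdV, one_mul]
  -- the attained value computation
  have hSS : S * S = 1 := by
    rw [hS, diagonal_mul_diagonal,
      show (fun i => ![1, 1, U.det * V.det] i * ![1, 1, U.det * V.det] i) = fun _ => (1:ℝ)
        from funext fun i => by fin_cases i <;> simp [hd2], diagonal_one]
  have hSt : Sᵀ = S := by rw [hS, diagonal_transpose]
  have hattain : Matrix.trace ((V * S * Uᵀ) * M) = σ 0 + σ 1 + (U * V).det * σ 2 := by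
    have e1 : (V * S * Uᵀ) * M = V * (S * Matrix.diagonal σ) * Vᵀ := by
      rw [hM]
      calc (V * S * Uᵀ) * (U * Matrix.diagonal σ * Vᵀ)
          = V * S * ((Uᵀ * U) * (Matrix.diagonal σ * Vᵀ)) := by
            simp only [mul_assoc]
        _ = V * (S * Matrix.diagonal σ) * Vᵀ := by
            rw [hUtU, one_mul]; simp only [mul_assoc]
    rw [e1, trace_mul_comm, ← mul_assoc, hVtV, one_mul, hS, diagonal_mul_diagonal,
      trace_diagonal, Fin.sum_univ_three, hduv]
    simp
  refine ⟨⟨⟨V * S * Uᵀ, ?_, ?_, hattain.symm⟩, ?_⟩, hattain⟩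
  · -- orthogonality of the maximizer
    calc (V * S * Uᵀ) * (V * S * Uᵀ)ᵀ
        = V * S * ((Uᵀ * Uᵀᵀ) * (Sᵀ * Vᵀ)) := by
          simp only [transpose_mul, transpose_transpose, mul_assoc]
      _ = V * (S * S) * Vᵀ := by
          rw [transpose_transpose, hUtU, one_mul, hSt]; simp only [mul_assoc]
      _ = 1 := by rw [hSS, mul_one, hV]
  · -- determinant of the maximizer
    have hdS : S.det = U.det * V.det := by
      rw [hS, det_diagonal, Fin.prod_univ_three]; simp
    rw [det_mul, det_mul, det_transpose, hdS]
    calc V.det * (U.det * V.det) * U.det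
        = (U.det * V.det) * (U.det * V.det) := by ring
      _ = 1 := hd2
  · -- upper bound
    rintro x ⟨R, hR1, hR2, rfl⟩
    have hW1 : (Vᵀ * R * U) * (Vᵀ * R * U)ᵀ = 1 := by
      calc (Vᵀ * R * U) * (Vᵀ * R * U)ᵀ
          = Vᵀ * (R * ((U * Uᵀ) * (Rᵀ * V))) := by
            simp only [transpose_mul, transpose_transpose, mul_assoc]
        _ = Vᵀ * (R * Rᵀ) * V := by rw [hU, one_mul]; simp only [mul_assoc]
        _ = 1 := by rw [hR1, mul_one, hVtV]
    have hW2 : (Vᵀ * R * U).det = U.det * V.det := by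
      rw [det_mul, det_mul, det_transpose, hR2]; ring
    have hd : U.det * V.det = 1 ∨ U.det * V.det = -1 :=
      mul_self_eq_one_iff.mp hd2
    have htr : Matrix.trace (R * M) = Matrix.trace ((Vᵀ * R * U) * Matrix.diagonal σ) := by
      rw [hM]
      calc Matrix.trace (R * (U * Matrix.diagonal σ * Vᵀ))
          = Matrix.trace ((R * U * Matrix.diagonal σ) * Vᵀ) := by simp only [mul_assoc]
        _ = Matrix.trace (Vᵀ * (R * U * Matrix.diagonal σ)) := trace_mul_comm _ _
        _ = Matrix.trace ((Vᵀ * R * U) * Matrix.diagonal σ) := by simp only [mul_assoc]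
    rw [htr, hduv]
    exact key_bound _ σ _ hσ hσ' hσ'' hW1 hW2 hd
end

section
/- The map f from the 6D representation to SO(3) is surjective: for every R ∈ SO(3) with columns b₁, b₂, b₃, setting a₁ = b₁ and a₂ = b₂ gives f([a₁ a₂]) = R. In particular f(f⁻¹(R)) = R where f⁻¹(R) takes the first two columns of R. -/
open Matrix

theorem sixD_representation_surjective
    (R : Matrix (Fin 3) (Fin 3) ℝ)
    (hR : R * Rᵀ = 1) (hdet : R.det = 1)
    (c : Fin 3 → EuclideanSpace ℝ (Fin 3))
    (hc : ∀ i, c i = fun j => R j i)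
    (a₁ a₂ b₁ b₂ b₃ : EuclideanSpace ℝ (Fin 3))
    (ha₁ : a₁ = c 0) (ha₂ : a₂ = c 1)
    (hb₁ : b₁ = ‖a₁‖⁻¹ • a₁)
    (hb₂ : b₂ = ‖a₂ - (inner (𝕜 := ℝ) b₁ a₂) • b₁‖⁻¹ • (a₂ - (inner (𝕜 := ℝ) b₁ a₂) • b₁))
    (hb₃ : b₃ = crossProduct b₁ b₂) :
    Matrix.of (fun i j => ![b₁, b₂, b₃] j i) = R := by
  have hRT : Rᵀ * R = 1 := mul_eq_one_comm.mp hR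
  have hcol : ∀ i j, (∑ k, R k i * R k j) = if i = j then (1:ℝ) else 0 := by
    intro i j
    have := congrFun (congrFun hRT i) j
    simpa [Matrix.mul_apply, Matrix.one_apply, mul_comm] using this
  have h00 : (∑ k, R k 0 * R k 0) = 1 := by simpa using hcol 0 0
  have h11 : (∑ k, R k 1 * R k 1) = 1 := by simpa using hcol 1 1
  have h01 : (∑ k, R k 0 * R k 1) = 0 := by simpa using hcol 0 1
  -- norms of the first two columns
  have hn1 : ‖a₁‖ = 1 := by
    have h : (inner (𝕜 := ℝ) a₁ a₁) = 1 := by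
      rw [ha₁, PiLp.inner_apply]; simpa [hc, sq] using h00
    rw [real_inner_self_eq_norm_sq, sq, mul_self_eq_one_iff] at h
    rcases h with h | h
    · exact h
    · linarith [norm_nonneg a₁]
  have hb₁' : b₁ = c 0 := by rw [hb₁, hn1, inv_one, one_smul, ha₁]
  have hinner : (inner (𝕜 := ℝ) b₁ a₂) = 0 := by
    rw [hb₁', ha₂]
    simpa [PiLp.inner_apply, hc, mul_comm] using h01
  have hn2 : ‖a₂‖ = 1 := by
    have h : (inner (𝕜 := ℝ) a₂ a₂) = 1 := by
      rw [ha₂, PiLp.inner_apply]; simpa [hc, sq] using h11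
    rw [real_inner_self_eq_norm_sq, sq, mul_self_eq_one_iff] at h
    rcases h with h | h
    · exact h
    · linarith [norm_nonneg a₂]
  have hb₂' : b₂ = c 1 := by
    rw [hb₂, hinner, zero_smul, sub_zero, hn2, inv_one, one_smul, ha₂]
  -- adjugate R = Rᵀ
  have hadj : adjugate R = Rᵀ := by
    calc adjugate R = (Rᵀ * R) * adjugate R := by rw [hRT, one_mul]
    _ = Rᵀ * (R * adjugate R) := by rw [Matrix.mul_assoc]
    _ = Rᵀ := by rw [Matrix.mul_adjugate, hdet, one_smul, Matrix.mul_one]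
  have hadj3 := (adjugate_fin_three R).symm.trans hadj
  have e20 := congrFun (congrFun hadj3 2) 0
  have e21 := congrFun (congrFun hadj3 2) 1
  have e22 := congrFun (congrFun hadj3 2) 2
  simp [Matrix.transpose_apply] at e20 e21 e22
  have hb₃' : b₃ = c 2 := by
    apply WithLp.ofLp_injective
    rw [hb₃, hb₁', hb₂', hc 0, hc 1, hc 2]
    funext i
    fin_cases i <;> simp [cross_apply] <;> linarith [e20, e21, e22]
  ext i j
  fin_cases j <;> fin_cases i <;>
    simp [hb₁', hb₂', hb₃', hc]
end
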